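/- Let n > 1 and let a_1, ..., a_n, a_{n+1} be real numbers satisfying (1/(n-1))·(a_1 + ... + a_n)^2 = a_1^2 + ... + a_n^2 + a_{n+1}. Then 2·a_1·a_2 = a_{n+1} if and only if a_1 + a_2 = a_3 = a_4 = ... = a_n. -/

import Mathlib

theorem chen_lemma_equality (n : ℕ) (hn : 3 ≤ n) (a : Fin (n + 1) → ℝ)
    (h : (1 / ((n : ℝ) - 1)) * (∑ i : Fin n, a i.castSucc) ^ 2 =
      ∑ i : Fin n, (a i.castSucc) ^ 2 + a (Fin.last n)) :
    2 * a 0 * a 1 = a (Fin.last n) ↔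
      ∀ i : Fin n, 2 ≤ (i : ℕ) → a 0 + a 1 = a i.castSucc := by
  have hnR : (3:ℝ) ≤ (n:ℝ) := by exact_mod_cast hn
  have hne : ((n:ℝ) - 1) ≠ 0 := by linarith
  set A : ℕ → ℝ := fun i => if hi : i < n then a ((⟨i, hi⟩ : Fin n).castSucc) else 0 with hAdef
  have hA : ∀ i : Fin n, A i = a i.castSucc := by
    intro i
    simp only [hAdef, i.isLt, dif_pos, Fin.eta]
  set t : Finset ℕ := Finset.Ico 2 n with htdef
  have hcard : (t.card : ℝ) = (n:ℝ) - 2 := by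
    rw [htdef, Nat.card_Ico]
    push_cast [Nat.cast_sub (by omega : 2 ≤ n)]
    ring
  -- split a sum over Fin n
  have hsplit : ∀ f : ℕ → ℝ, ∑ i : Fin n, f i = f 0 + f 1 + ∑ i ∈ t, f i := by
    intro f
    rw [Fin.sum_univ_eq_sum_range, ← Finset.sum_range_add_sum_Ico f (by omega : 2 ≤ n)]
    simp [Finset.sum_range_succ, htdef]
  have hA0 : A 0 = a 0 := by
    rw [hA ⟨0, by omega⟩]; congr 1
  have hA1 : A 1 = a 1 := by
    rw [hA ⟨1, by omega⟩]; congr 1; refine Fin.ext ?_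
    rw [Fin.val_one', Nat.mod_eq_of_lt (by omega)]; simp
  clear hAdef
  clear_value A
  have hsum : ∑ i : Fin n, a i.castSucc = a 0 + a 1 + ∑ i ∈ t, A i := by
    rw [← hA0, ← hA1, ← hsplit A]
    exact Finset.sum_congr rfl fun i _ => (hA i).symm
  have hsq : ∑ i : Fin n, (a i.castSucc) ^ 2 = a 0 ^ 2 + a 1 ^ 2 + ∑ i ∈ t, (A i) ^ 2 := by
    rw [← hA0, ← hA1, ← hsplit (fun i => (A i) ^ 2)]
    exact Finset.sum_congr rfl fun i _ => by rw [hA]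
  rw [hsum, hsq, one_div, inv_mul_eq_div, div_eq_iff hne] at h
  -- deviation sums
  set D : ℝ := ∑ i ∈ t, (A i - (a 0 + a 1)) with hDdef
  set V : ℝ := ∑ i ∈ t, (A i - (a 0 + a 1)) ^ 2 with hVdef
  have hS2 : ∑ i ∈ t, A i = ((n:ℝ) - 2) * (a 0 + a 1) + D := by
    rw [hDdef, Finset.sum_sub_distrib, Finset.sum_const, nsmul_eq_mul, hcard]; ring
  have hQ2 : ∑ i ∈ t, (A i) ^ 2
      = V + 2 * (a 0 + a 1) * D + ((n:ℝ) - 2) * (a 0 + a 1) ^ 2 := by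
    have : ∀ i ∈ t, (A i) ^ 2 = (A i - (a 0 + a 1)) ^ 2
        + 2 * (a 0 + a 1) * (A i - (a 0 + a 1)) + (a 0 + a 1) ^ 2 := fun i _ => by ring
    rw [Finset.sum_congr rfl this, Finset.sum_add_distrib, Finset.sum_add_distrib,
      ← Finset.mul_sum, Finset.sum_const, nsmul_eq_mul, hcard, ← hDdef, ← hVdef]
  rw [hS2, hQ2] at h
  have hVnonneg : 0 ≤ V := Finset.sum_nonneg fun i _ => sq_nonneg _
  constructor
  · intro heq
    have hDV : D ^ 2 = ((n:ℝ) - 1) * V := by linear_combination h - ((n:ℝ) - 1) * heq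
    have cs : D ^ 2 ≤ ((n:ℝ) - 2) * V := by
      have := sq_sum_le_card_mul_sum_sq (s := t) (f := fun i => A i - (a 0 + a 1))
      rw [← hDdef, ← hVdef, hcard] at this
      exact this
    have hVle : V ≤ 0 := by linarith
    have hV0 : V = 0 := le_antisymm hVle hVnonneg
    have hzero : ∀ i ∈ t, (A i - (a 0 + a 1)) ^ 2 = 0 :=
      (Finset.sum_eq_zero_iff_of_nonneg fun i _ => sq_nonneg _).mp hV0
    intro i hi
    have hmem : (i : ℕ) ∈ t := by rw [htdef, Finset.mem_Ico]; exact ⟨hi, i.isLt⟩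
    have := hzero _ hmem
    have hAi : A (i : ℕ) = a 0 + a 1 := by
      have h2 := sq_eq_zero_iff.mp this
      linarith [h2]
    rw [← hA i, hAi]
  · intro hall
    have hall' : ∀ i ∈ t, A i = a 0 + a 1 := by
      intro i hi
      rw [htdef, Finset.mem_Ico] at hi
      rw [hA ⟨i, hi.2⟩]
      exact (hall ⟨i, hi.2⟩ hi.1).symm
    have hD0 : D = 0 := by
      rw [hDdef]; exact Finset.sum_eq_zero fun i hi => by rw [hall' i hi]; ring
    have hV0 : V = 0 := by
      rw [hVdef]; exact Finset.sum_eq_zero fun i hi => by rw [hall' i hi]; ring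
    rw [hD0, hV0] at h
    have key : ((n:ℝ) - 1) * (2 * a 0 * a 1 - a (Fin.last n)) = 0 := by
      linear_combination h
    rcases mul_eq_zero.mp key with h' | h'
    · exact absurd h' hne
    · linarith
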